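/- Let E(t) = c·1_{[τ,∞)}(t)·(t−τ) be a one-fold residue with c ≠ 0 and τ ∈ [t_{K}, t_{K+1}) for strictly increasing nodes t_k. Then for the nonuniform divided difference of order N ≥ 2, D^N E[k]/c = μ_K^N[k]·p + β_K^N[k]·(1−p), where p = (t_{K+1}−τ)/(t_{K+1}−t_K) ∈ [0,1], μ_K^2[k] = 1_{{K−1}}(k)/(t_{k+2}−t_k), β_K^2[k] = 1_{{K}}(k)/(t_{k+2}−t_k), and μ, β satisfy the same divided-difference recursion as D. -/

import Mathlib

/-- The nonuniform divided-difference operator on nodes `t`. -/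
noncomputable def nonUnifDiff (t : ℤ → ℝ) (f : ℤ → ℝ) : ℕ → ℤ → ℝ
  | 0 => f
  | N + 1 => fun k =>
      (nonUnifDiff t f N (k + 1) - nonUnifDiff t f N k) / (t (k + (N : ℤ) + 1) - t k)

/-- Iterates the divided-difference recursion starting from order `2`:
`liftTwo t f m` is the order-`(2+m)` sequence obtained from the order-`2` sequence `f`,
so that the step from order `N = m+2` to order `N+1` divides by `t (k+N+1) - t k`. -/
noncomputable def liftTwo (t : ℤ → ℝ) (f : ℤ → ℝ) : ℕ → ℤ → ℝ
  | 0 => f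
  | m + 1 => fun k =>
      (liftTwo t f m (k + 1) - liftTwo t f m k) / (t (k + (m : ℤ) + 3) - t k)

/-- `μ_K^N`, defined for `N ≥ 2` from `μ_K^2[k] = 1_{{K−1}}(k)/(t_{k+2}−t_k)`. -/
noncomputable def muSeq (t : ℤ → ℝ) (K : ℤ) (N : ℕ) : ℤ → ℝ :=
  liftTwo t (fun k => if k = K - 1 then 1 / (t (k + 2) - t k) else 0) (N - 2)

/-- `β_K^N`, defined for `N ≥ 2` from `β_K^2[k] = 1_{{K}}(k)/(t_{k+2}−t_k)`. -/
noncomputable def betaSeq (t : ℤ → ℝ) (K : ℤ) (N : ℕ) : ℤ → ℝ :=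
  liftTwo t (fun k => if k = K then 1 / (t (k + 2) - t k) else 0) (N - 2)

lemma nonUnifDiff_smul (t : ℤ → ℝ) (c : ℝ) (g : ℤ → ℝ) :
    ∀ N k, nonUnifDiff t (fun j => c * g j) N k = c * nonUnifDiff t g N k := by
  intro N
  induction N with
  | zero => intro k; rfl
  | succ n ih =>
      intro k
      simp only [nonUnifDiff, ih]
      ring

lemma nonUnifDiff_two (t : ℤ → ℝ) (g : ℤ → ℝ) (k : ℤ) :
    nonUnifDiff t g 2 k =
      ((g (k + 2) - g (k + 1)) / (t (k + 2) - t (k + 1)) -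
       (g (k + 1) - g k) / (t (k + 1) - t k)) / (t (k + 2) - t k) := by
  simp only [nonUnifDiff]
  norm_num
  rw [show k + 1 + 1 = k + 2 by ring]

lemma key (t : ℤ → ℝ) (ht : StrictMono t) (τ : ℝ) (K : ℤ)
    (h1 : t K ≤ τ) (h2 : τ < t (K + 1)) :
    ∀ m k, nonUnifDiff t (fun j => max (t j - τ) 0) (m + 2) k =
      liftTwo t (fun k => if k = K - 1 then 1 / (t (k + 2) - t k) else 0) m k *
        ((t (K + 1) - τ) / (t (K + 1) - t K)) +
      liftTwo t (fun k => if k = K then 1 / (t (k + 2) - t k) else 0) m k *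
        (1 - (t (K + 1) - τ) / (t (K + 1) - t K)) := by
  have hg0 : ∀ j : ℤ, j ≤ K → max (t j - τ) 0 = 0 := by
    intro j hj
    have : t j ≤ τ := le_trans (ht.monotone hj) h1
    simp [max_eq_right, sub_nonpos.mpr this]
  have hg1 : ∀ j : ℤ, K + 1 ≤ j → max (t j - τ) 0 = t j - τ := by
    intro j hj
    have : τ ≤ t j := le_trans h2.le (ht.monotone hj)
    simp [max_eq_left, sub_nonneg.mpr this]
  have hd : ∀ a b : ℤ, a < b → t b - t a ≠ 0 := fun a b h =>
    sub_ne_zero.mpr (ht h).ne'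
  intro m
  induction m with
  | zero =>
      intro k
      rw [show (0:ℕ) + 2 = 2 from rfl, nonUnifDiff_two]
      show _ = (if k = K - 1 then 1 / (t (k + 2) - t k) else 0) * _ +
        (if k = K then 1 / (t (k + 2) - t k) else 0) * _
      by_cases hk1 : k = K - 1
      · subst hk1
        rw [if_pos rfl, if_neg (by omega)]
        rw [show K - 1 + 1 = K by ring, show K - 1 + 2 = K + 1 by ring]
        rw [hg0 (K - 1) (by omega), hg0 K le_rfl, hg1 (K + 1) le_rfl]
        ring
      by_cases hk2 : k = K
      · rw [hk2]
        rw [if_neg (by omega), if_pos rfl]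
        rw [hg0 K le_rfl, hg1 (K + 1) (by omega), hg1 (K + 2) (by omega)]
        have d2 := hd (K + 1) (K + 2) (by omega)
        rw [show t (K + 2) - τ - (t (K + 1) - τ) = t (K + 2) - t (K + 1) by ring,
          div_self d2]
        ring
      rw [if_neg hk1, if_neg hk2, zero_mul, zero_mul, add_zero]
      have hcase : k ≤ K - 2 ∨ K + 1 ≤ k := by omega
      rcases hcase with hk | hk
      · rw [hg0 k (by omega), hg0 (k + 1) (by omega), hg0 (k + 2) (by omega)]
        simp
      · rw [hg1 k (by omega), hg1 (k + 1) (by omega), hg1 (k + 2) (by omega)]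
        have d1 := hd k (k + 1) (by omega)
        have d2 := hd (k + 1) (k + 2) (by omega)
        have e : (t (k + 2) - τ - (t (k + 1) - τ)) / (t (k + 2) - t (k + 1)) -
            (t (k + 1) - τ - (t k - τ)) / (t (k + 1) - t k) = 0 := by
          rw [show t (k + 2) - τ - (t (k + 1) - τ) = t (k + 2) - t (k + 1) by ring,
            show t (k + 1) - τ - (t k - τ) = t (k + 1) - t k by ring,
            div_self d2, div_self d1, sub_self]
        rw [e, zero_div]
  | succ n ih =>
      intro k
      have hstep : nonUnifDiff t (fun j => max (t j - τ) 0) (n + 1 + 2) k =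
          (nonUnifDiff t (fun j => max (t j - τ) 0) (n + 2) (k + 1) -
           nonUnifDiff t (fun j => max (t j - τ) 0) (n + 2) k) /
          (t (k + (n : ℤ) + 3) - t k) := by
        show (nonUnifDiff t (fun j => max (t j - τ) 0) (n + 2) (k + 1) -
            nonUnifDiff t (fun j => max (t j - τ) 0) (n + 2) k) /
            (t (k + ((n + 2 : ℕ) : ℤ) + 1) - t k) = _
        congr 1
        push_cast
        ring_nf
      rw [hstep, ih (k + 1), ih k]
      show _ = liftTwo t _ (n + 1) k * _ + liftTwo t _ (n + 1) k * _
      simp only [liftTwo]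
      ring

theorem nonUnifDiff_one_fold_residue
    (t : ℤ → ℝ) (ht : StrictMono t)
    (c τ : ℝ) (hc : c ≠ 0) (K : ℤ)
    (hτ : t K ≤ τ ∧ τ < t (K + 1))
    (E : ℝ → ℝ)
    (hE : ∀ x : ℝ, E x = c * Set.indicator (Set.Ici τ) (fun y => y - τ) x)
    (N : ℕ) (hN : 2 ≤ N) (k : ℤ) :
    nonUnifDiff t (fun j => E (t j)) N k / c =
      muSeq t K N k * ((t (K + 1) - τ) / (t (K + 1) - t K)) +
      betaSeq t K N k * (1 - (t (K + 1) - τ) / (t (K + 1) - t K)) := by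
  obtain ⟨m, rfl⟩ : ∃ m, N = m + 2 := ⟨N - 2, by omega⟩
  have hfun : (fun j => E (t j)) = fun j => c * max (t j - τ) 0 := by
    funext j
    rw [hE]
    by_cases h : τ ≤ t j
    · rw [Set.indicator_of_mem (Set.mem_Ici.mpr h), max_eq_left (sub_nonneg.mpr h)]
    · rw [Set.indicator_of_notMem (by simpa using h),
        max_eq_right (sub_nonpos.mpr (le_of_not_ge h))]
  rw [hfun, nonUnifDiff_smul, mul_div_cancel_left₀ _ hc, key t ht τ K hτ.1 hτ.2 m k]
  simp only [muSeq, betaSeq, Nat.add_sub_cancel]
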